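/- Let G be an infinite simple locally finite group and T a finite subgroup of G. Then there exist a finite subgroup H ≤ G and a normal subgroup N ⊴ H such that H/N is simple, T ≤ H, and T ∩ N = 1, and moreover |H/N| ≥ |T|. -/

import Mathlib

section Aux

variable {G : Type*} [Group G]

/-- The conjugate of a subgroup: elements `x` with `h⁻¹ * x * h ∈ P`. -/
def conjSub (h : G) (P : Subgroup G) : Subgroup G where
  carrier := {x | h⁻¹ * x * h ∈ P}
  one_mem' := by simpa using P.one_mem
  mul_mem' := by
    intro a b ha hb
    have key : h⁻¹ * (a * b) * h = (h⁻¹ * a * h) * (h⁻¹ * b * h) := by group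
    show h⁻¹ * (a * b) * h ∈ P
    rw [key]; exact mul_mem ha hb
  inv_mem' := by
    intro a ha
    have key : h⁻¹ * a⁻¹ * h = (h⁻¹ * a * h)⁻¹ := by group
    show h⁻¹ * a⁻¹ * h ∈ P
    rw [key]; exact inv_mem ha

lemma mem_conjSub {h x : G} {P : Subgroup G} : x ∈ conjSub h P ↔ h⁻¹ * x * h ∈ P := Iff.rfl

lemma conjSub_conjSub_inv (h : G) (P : Subgroup G) : conjSub h (conjSub h⁻¹ P) = P := by
  ext x
  rw [mem_conjSub, mem_conjSub, inv_inv]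
  have key : h * (h⁻¹ * x * h) * h⁻¹ = x := by group
  rw [key]

lemma conjSub_mono (h : G) {P Q : Subgroup G} (hPQ : P ≤ Q) : conjSub h P ≤ conjSub h Q := by
  intro x hx
  exact hPQ hx

/-- For an element `f` of the normal closure of `{t}`, there are finitely many conjugators
witnessing this. -/
lemma exists_conjurators [IsSimpleGroup G] {t : G} (ht : t ≠ 1) (f : G) :
    ∃ S : Set G, S.Finite ∧ ∀ E : Subgroup G, S ⊆ (E : Set G) →
      f ∈ Subgroup.closure {x | ∃ e ∈ E, x = e * t * e⁻¹} := by
  have hnc : Subgroup.normalClosure {t} = ⊤ := by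
    rcases IsSimpleGroup.eq_bot_or_eq_top_of_normal (Subgroup.normalClosure {t})
      Subgroup.normalClosure_normal with h | h
    · exfalso
      have htm : t ∈ Subgroup.normalClosure {t} :=
        Subgroup.subset_normalClosure (s := {t}) rfl
      rw [h, Subgroup.mem_bot] at htm
      exact ht htm
    · exact h
  have hf : f ∈ Subgroup.closure (Group.conjugatesOfSet {t}) := by
    show f ∈ Subgroup.normalClosure {t}
    rw [hnc]; trivial
  induction hf using Subgroup.closure_induction with
  | mem x hx =>
      rw [Group.mem_conjugatesOfSet_iff] at hx
      obtain ⟨a, ha, hconj⟩ := hx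
      rw [Set.mem_singleton_iff] at ha
      subst ha
      obtain ⟨c, hc⟩ := isConj_iff.mp hconj
      refine ⟨{c}, Set.finite_singleton c, fun E hE => ?_⟩
      apply Subgroup.subset_closure
      exact ⟨c, hE rfl, hc.symm⟩
  | one => exact ⟨∅, Set.finite_empty, fun E _ => Subgroup.one_mem _⟩
  | mul x y hx hy ihx ihy =>
      obtain ⟨S₁, hS₁, h₁⟩ := ihx
      obtain ⟨S₂, hS₂, h₂⟩ := ihy
      refine ⟨S₁ ∪ S₂, hS₁.union hS₂, fun E hE => ?_⟩
      exact mul_mem (h₁ E (fun z hz => hE (Or.inl hz))) (h₂ E (fun z hz => hE (Or.inr hz)))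
  | inv x hx ihx =>
      obtain ⟨S, hS, h⟩ := ihx
      exact ⟨S, hS, fun E hE => inv_mem (h E hE)⟩

/-- Given a finite subgroup `F` of a simple locally finite group, there is a finite subgroup
`E ⊇ F` such that `F` is contained in the normal closure in `E` of every nontrivial element
of `F`. -/
lemma exists_envelope [IsSimpleGroup G]
    (hLF : ∀ S : Finset G, Finite (Subgroup.closure (S : Set G)))
    (F : Subgroup G) (hF : (F : Set G).Finite) :
    ∃ E : Subgroup G, F ≤ E ∧ (E : Set G).Finite ∧
      ∀ t ∈ F, t ≠ 1 → ∀ f ∈ F, f ∈ Subgroup.closure {x | ∃ e ∈ E, x = e * t * e⁻¹} := by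
  classical
  have key : ∀ t f : G, ∃ S : Set G, S.Finite ∧ (t ≠ 1 → ∀ E : Subgroup G, S ⊆ (E : Set G) →
      f ∈ Subgroup.closure {x | ∃ e ∈ E, x = e * t * e⁻¹}) := by
    intro t f
    by_cases ht : t = 1
    · exact ⟨∅, Set.finite_empty, fun h => absurd ht h⟩
    · obtain ⟨S, hS, h⟩ := exists_conjurators ht f
      exact ⟨S, hS, fun _ => h⟩
  choose S hSfin hS using key
  set U : Set G := (F : Set G) ∪ ⋃ t ∈ (F : Set G), ⋃ f ∈ (F : Set G), S t f with hU_def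
  have hU : U.Finite := by
    refine hF.union (hF.biUnion fun t _ => hF.biUnion fun f _ => hSfin t f)
  set E : Subgroup G := Subgroup.closure U with hE_def
  have hEfin : Finite E := by
    have := hLF hU.toFinset
    rwa [Set.Finite.coe_toFinset] at this
  refine ⟨E, ?_, ?_, ?_⟩
  · intro x hx
    exact Subgroup.subset_closure (Or.inl hx)
  · exact Set.toFinite _
  · intro t ht ht1 f hf
    refine hS t f ht1 E ?_
    intro x hx
    refine Subgroup.subset_closure (Or.inr ?_)
    exact Set.mem_biUnion ht (Set.mem_biUnion hf hx)

/-- The set of subgroups contained in a finite subgroup is finite. -/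
lemma finite_subgroups_le {D : Subgroup G} (hD : (D : Set G).Finite) :
    {P : Subgroup G | P ≤ D}.Finite := by
  have h1 : {S : Set G | S ⊆ (D : Set G)}.Finite := hD.finite_subsets
  have h2 : ((fun P : Subgroup G => (P : Set G)) ⁻¹' {S : Set G | S ⊆ (D : Set G)}).Finite :=
    h1.preimage (Set.injOn_of_injective SetLike.coe_injective)
  exact h2

end Aux

theorem stmt_19 (G : Type*) [Group G] [IsSimpleGroup G] [Infinite G]
    (hLF : ∀ S : Finset G, Finite (Subgroup.closure (S : Set G)))
    (T : Subgroup G) (hT : Finite T) :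
    ∃ (H : Subgroup G) (N : Subgroup H) (hN : N.Normal), Finite H ∧
      (letI := hN; IsSimpleGroup (H ⧸ N)) ∧ T ≤ H ∧
      T.subgroupOf H ⊓ N = ⊥ ∧ Nat.card T ≤ Nat.card (H ⧸ N) := by
  classical
  obtain ⟨g, hg⟩ := exists_ne (1 : G)
  -- Step 1 : a finite non-trivial subgroup F containing T
  have hTset : (T : Set G).Finite := Set.toFinite _
  have hF₀ : (insert g (T : Set G)).Finite := hTset.insert g
  set F : Subgroup G := Subgroup.closure (insert g (T : Set G)) with hF_def
  have hFfin : (F : Set G).Finite := by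
    have := hLF hF₀.toFinset
    rw [Set.Finite.coe_toFinset] at this
    exact Set.toFinite _
  have hTF : T ≤ F := fun x hx => Subgroup.subset_closure (Set.mem_insert_of_mem _ hx)
  have hgF : g ∈ F := Subgroup.subset_closure (Set.mem_insert _ _)
  -- Step 2 : envelopes E and D
  obtain ⟨E, hFE, hEfin, hEprop⟩ := exists_envelope hLF F hFfin
  obtain ⟨D, hED, hDfin, hDprop⟩ := exists_envelope hLF E hEfin
  have hgE : g ∈ E := hFE hgF
  have hsub_fin : {P : Subgroup G | P ≤ D}.Finite := finite_subgroups_le hDfin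
  -- Step 3 : N, maximal normal subgroup of D meeting E trivially
  set 𝒩 : Set (Subgroup G) :=
    {P | P ≤ D ∧ (∀ d ∈ D, ∀ p ∈ P, d * p * d⁻¹ ∈ P) ∧ P ⊓ E = ⊥} with h𝒩_def
  have h𝒩fin : 𝒩.Finite := hsub_fin.subset fun P hP => hP.1
  have hbot𝒩 : (⊥ : Subgroup G) ∈ 𝒩 := by
    refine ⟨bot_le, ?_, bot_inf_eq E⟩
    intro d _ p hp
    rw [Subgroup.mem_bot] at hp ⊢
    rw [hp]; group
  obtain ⟨N, hN𝒩, hNmax⟩ := Set.Finite.exists_maximalFor id 𝒩 h𝒩fin ⟨⊥, hbot𝒩⟩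
  simp only [id] at hNmax
  -- Step 4 : W, minimal normal subgroup of D strictly above N
  set 𝒲 : Set (Subgroup G) :=
    {X | X ≤ D ∧ (∀ d ∈ D, ∀ x ∈ X, d * x * d⁻¹ ∈ X) ∧ N < X} with h𝒲_def
  have h𝒲fin : 𝒲.Finite := hsub_fin.subset fun P hP => hP.1
  have hND : N < D := by
    refine lt_of_le_of_ne hN𝒩.1 ?_
    intro h
    have : g ∈ N ⊓ E := ⟨h ▸ hED hgE, hgE⟩
    rw [hN𝒩.2.2, Subgroup.mem_bot] at this
    exact hg this
  have hD𝒲 : D ∈ 𝒲 := ⟨le_refl D, fun d hd x hx => mul_mem (mul_mem hd hx) (inv_mem hd), hND⟩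
  obtain ⟨W, hW𝒲, hWmin⟩ := Set.Finite.exists_minimalFor id 𝒲 h𝒲fin ⟨D, hD𝒲⟩
  simp only [id] at hWmin
  have hWD : W ≤ D := hW𝒲.1
  have hWconj : ∀ d ∈ D, ∀ x ∈ W, d * x * d⁻¹ ∈ W := hW𝒲.2.1
  have hNW : N < W := hW𝒲.2.2
  -- Step 5 : E ≤ W
  have hWE_ne : W ⊓ E ≠ ⊥ := by
    intro h
    have hmem : W ∈ 𝒩 := ⟨hWD, hWconj, h⟩
    exact (ne_of_lt hNW) (le_antisymm hNW.le (hNmax hmem hNW.le))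
  obtain ⟨s, hs1⟩ := Subgroup.ne_bot_iff_exists_ne_one.mp hWE_ne
  have hsW : (s : G) ∈ W := s.2.1
  have hsE : (s : G) ∈ E := s.2.2
  have hs_ne : (s : G) ≠ 1 := by
    intro h
    exact hs1 (Subtype.ext h)
  have hEW : E ≤ W := by
    intro e he
    have h1 := hDprop s hsE hs_ne e he
    refine (Subgroup.closure_le W).mpr ?_ h1
    rintro x ⟨d, hd, rfl⟩
    exact hWconj d hd s hsW
  have hFW : F ≤ W := le_trans hFE hEW
  -- Step 6 : maximal normal subgroups of W above N
  set Pf : Set (Subgroup G) :=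
    {P | P ≤ W ∧ (∀ w ∈ W, ∀ p ∈ P, w * p * w⁻¹ ∈ P) ∧ N ≤ P ∧ P ≠ W} with hPf_def
  have hPffin : Pf.Finite := hsub_fin.subset fun P hP => le_trans hP.1 hWD
  have hNPf : N ∈ Pf := by
    refine ⟨hNW.le, ?_, le_refl N, (ne_of_lt hNW)⟩
    intro w hw p hp
    exact hN𝒩.2.1 w (hWD hw) p hp
  set M : Set (Subgroup G) := {P ∈ Pf | ∀ Q ∈ Pf, P ≤ Q → P = Q} with hM_def
  have hPle_max : ∀ P ∈ Pf, ∃ Q ∈ M, P ≤ Q := by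
    intro P hP
    obtain ⟨Q, hQ, hQmax⟩ := Set.Finite.exists_maximalFor id {Q ∈ Pf | P ≤ Q}
      (hPffin.subset fun R hR => hR.1) ⟨P, hP, le_refl P⟩
    simp only [id] at hQmax
    refine ⟨Q, ⟨hQ.1, fun R hR hQR => le_antisymm hQR (hQmax ⟨hR, le_trans hQ.2 hQR⟩ hQR)⟩, hQ.2⟩
  obtain ⟨P₁, hP₁M, _⟩ := hPle_max N hNPf
  -- Step 7 : the intersection R of all maximal elements of Pf equals N
  set R : Subgroup G := sInf M with hR_def
  have hNR : N ≤ R := le_sInf fun P hP => hP.1.2.2.1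
  have hRW : R ≤ W := le_trans (sInf_le hP₁M) hP₁M.1.1
  have hRneW : R ≠ W := by
    intro h
    exact hP₁M.1.2.2.2 (le_antisymm hP₁M.1.1 (h ▸ sInf_le hP₁M))
  -- conjugation by elements of D permutes Pf and M
  have hconjPf : ∀ h ∈ D, ∀ P ∈ Pf, conjSub h P ∈ Pf := by
    intro h hh P hP
    obtain ⟨hPW, hPconj, hNP, hPne⟩ := hP
    have hW_fix : ∀ x ∈ W, x ∈ conjSub h W := by
      intro x hx
      rw [mem_conjSub]
      have : h⁻¹ * x * (h⁻¹)⁻¹ ∈ W := hWconj h⁻¹ (inv_mem hh) x hx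
      rwa [inv_inv] at this
    refine ⟨?_, ?_, ?_, ?_⟩
    · intro x hx
      rw [mem_conjSub] at hx
      have : h * (h⁻¹ * x * h) * h⁻¹ ∈ W := hWconj h hh _ (hPW hx)
      have key : h * (h⁻¹ * x * h) * h⁻¹ = x := by group
      rwa [key] at this
    · intro w hw x hx
      rw [mem_conjSub] at hx ⊢
      have hw' : h⁻¹ * w * h ∈ W := by
        have : h⁻¹ * w * (h⁻¹)⁻¹ ∈ W := hWconj h⁻¹ (inv_mem hh) w hw
        rwa [inv_inv] at this
      have := hPconj _ hw' _ hx
      have key : (h⁻¹ * w * h) * (h⁻¹ * x * h) * (h⁻¹ * w * h)⁻¹ = h⁻¹ * (w * x * w⁻¹) * h := by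
        group
      rwa [key] at this
    · intro n hn
      rw [mem_conjSub]
      have : h⁻¹ * n * (h⁻¹)⁻¹ ∈ N := hN𝒩.2.1 h⁻¹ (inv_mem hh) n hn
      rw [inv_inv] at this
      exact hNP this
    · intro hEq
      apply hPne
      apply le_antisymm hPW
      intro x hx
      have hx1 : x ∈ conjSub h⁻¹ W := by
        rw [mem_conjSub, inv_inv]
        exact hWconj h hh x hx
      rw [← hEq] at hx1
      have key : conjSub h⁻¹ (conjSub h P) = P := by
        have h3 := conjSub_conjSub_inv h⁻¹ P
        rwa [inv_inv] at h3
      rwa [key] at hx1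
  have hconjM : ∀ h ∈ D, ∀ P ∈ M, conjSub h P ∈ M := by
    intro h hh P hP
    refine ⟨hconjPf h hh P hP.1, ?_⟩
    intro Q hQ hle
    have h1 : P ≤ conjSub h⁻¹ Q := by
      intro x hx
      rw [mem_conjSub, inv_inv]
      apply hle
      rw [mem_conjSub]
      have key : h⁻¹ * (h * x * h⁻¹) * h = x := by group
      rw [key]; exact hx
    have h2 := hP.2 (conjSub h⁻¹ Q) (hconjPf h⁻¹ (inv_mem hh) Q hQ) h1
    rw [h2, conjSub_conjSub_inv]
  have hRconj : ∀ d ∈ D, ∀ x ∈ R, d * x * d⁻¹ ∈ R := by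
    intro d hd x hx
    rw [hR_def, Subgroup.mem_sInf] at hx ⊢
    intro P hP
    have h1 := hconjM d⁻¹ (inv_mem hd) P hP
    have h2 := hx _ h1
    rw [mem_conjSub, inv_inv] at h2
    exact h2
  have hRN : R = N := by
    by_contra hne
    have hR𝒲 : R ∈ 𝒲 := ⟨le_trans hRW hWD, hRconj, lt_of_le_of_ne hNR fun h => hne h.symm⟩
    exact hRneW (le_antisymm hRW (hWmin hR𝒲 hRW))
  -- Step 8 : get a maximal element P of Pf avoiding F
  have hexP : ∃ P ∈ M, ¬ F ≤ P := by
    by_contra hall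
    push_neg at hall
    have hFR : F ≤ R := le_sInf fun P hP => hall P hP
    have : g ∈ N ⊓ E := ⟨hRN ▸ hFR hgF, hgE⟩
    rw [hN𝒩.2.2, Subgroup.mem_bot] at this
    exact hg this
  obtain ⟨P, hPM, hPF⟩ := hexP
  have hPW : P ≤ W := hPM.1.1
  have hPconj : ∀ w ∈ W, ∀ p ∈ P, w * p * w⁻¹ ∈ P := hPM.1.2.1
  have hPneW : P ≠ W := hPM.1.2.2.2
  -- Step 9 : F ⊓ P = ⊥
  have hFP : F ⊓ P = ⊥ := by
    rw [eq_bot_iff]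
    intro t ht
    rw [Subgroup.mem_bot]
    by_contra ht1
    apply hPF
    intro f hf
    have h1 := hEprop t ht.1 ht1 f hf
    refine (Subgroup.closure_le P).mpr ?_ h1
    rintro x ⟨e, he, rfl⟩
    exact hPconj e (hEW he) t ht.2
  -- Step 10 : assemble the answer
  have hTW : T ≤ W := le_trans hTF hFW
  have hWfin : Finite W := (hDfin.subset hWD).to_subtype
  set Np : Subgroup W := P.subgroupOf W with hNp_def
  have hNpNormal : Np.Normal := by
    constructor
    intro n hn w
    rw [hNp_def, Subgroup.mem_subgroupOf] at hn ⊢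
    have := hPconj w w.2 n hn
    simpa using this
  letI := hNpNormal
  -- the quotient is nontrivial
  obtain ⟨w₀, hw₀W, hw₀P⟩ : ∃ w ∈ W, w ∉ P := by
    by_contra h
    push_neg at h
    exact hPneW (le_antisymm hPW h)
  have hnt : Nontrivial (W ⧸ Np) := by
    refine nontrivial_of_ne (QuotientGroup.mk (⟨w₀, hw₀W⟩ : W)) 1 ?_
    rw [Ne, QuotientGroup.eq_one_iff]
    rw [hNp_def, Subgroup.mem_subgroupOf]
    exact hw₀P
  -- simplicity of the quotient
  have hsurj : Function.Surjective (QuotientGroup.mk' Np) := QuotientGroup.mk'_surjective Np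
  have hsimple : IsSimpleGroup (W ⧸ Np) := by
    refine { toNontrivial := hnt, eq_bot_or_eq_top_of_normal := ?_ }
    intro Qbar hQbar
    set Q : Subgroup W := Qbar.comap (QuotientGroup.mk' Np) with hQ_def
    have hQnorm : Q.Normal := hQbar.comap _
    have hNpQ : Np ≤ Q := by
      intro n hn
      show QuotientGroup.mk' Np n ∈ Qbar
      have : QuotientGroup.mk' Np n = 1 := by
        rw [← MonoidHom.mem_ker, QuotientGroup.ker_mk']
        exact hn
      rw [this]
      exact Qbar.one_mem
    set Q' : Subgroup G := Q.map W.subtype with hQ'_def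
    have hQ'W : Q' ≤ W := by
      rintro x ⟨q, hq, rfl⟩
      exact q.2
    have hQ'conj : ∀ w ∈ W, ∀ x ∈ Q', w * x * w⁻¹ ∈ Q' := by
      rintro w hw x ⟨q, hq, rfl⟩
      refine ⟨⟨w, hw⟩ * q * ⟨w, hw⟩⁻¹, hQnorm.conj_mem q hq ⟨w, hw⟩, ?_⟩
      simp
    have hPQ' : P ≤ Q' := by
      intro p hp
      refine ⟨⟨p, hPW hp⟩, hNpQ ?_, rfl⟩
      rw [hNp_def, Subgroup.mem_subgroupOf]
      exact hp
    by_cases hQ'eq : Q' = W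
    · right
      have hQtop : Q = ⊤ := by
        rw [eq_top_iff]
        intro x _
        have hx : (x : G) ∈ Q' := by rw [hQ'eq]; exact x.2
        obtain ⟨q, hq, hqx⟩ := hx
        have : q = x := Subtype.ext hqx
        rwa [← this]
      calc Qbar = (Qbar.comap (QuotientGroup.mk' Np)).map (QuotientGroup.mk' Np) :=
              (Subgroup.map_comap_eq_self_of_surjective hsurj Qbar).symm
        _ = (⊤ : Subgroup W).map (QuotientGroup.mk' Np) := by rw [← hQ_def, hQtop]
        _ = ⊤ := Subgroup.map_top_of_surjective _ hsurj
    · left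
      have hQ'Pf : Q' ∈ Pf := ⟨hQ'W, hQ'conj, le_trans hPM.1.2.2.1 hPQ', hQ'eq⟩
      have hPQ : P = Q' := hPM.2 Q' hQ'Pf hPQ'
      have hQNp : Q ≤ Np := by
        intro q hq
        rw [hNp_def, Subgroup.mem_subgroupOf]
        have : (q : G) ∈ Q' := ⟨q, hq, rfl⟩
        rw [← hPQ] at this
        exact this
      rw [eq_bot_iff]
      rw [← Subgroup.map_comap_eq_self_of_surjective hsurj Qbar]
      rintro x ⟨q, hq, rfl⟩
      have : QuotientGroup.mk' Np q = 1 := by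
        rw [← MonoidHom.mem_ker, QuotientGroup.ker_mk']
        exact hQNp hq
      rw [this]
      exact Subgroup.one_mem _
  -- trivial intersection with T
  have hTNp : T.subgroupOf W ⊓ Np = ⊥ := by
    rw [eq_bot_iff]
    intro x hx
    rw [Subgroup.mem_inf] at hx
    obtain ⟨hx1, hx2⟩ := hx
    rw [Subgroup.mem_subgroupOf] at hx1
    rw [hNp_def, Subgroup.mem_subgroupOf] at hx2
    have : (x : G) ∈ F ⊓ P := ⟨hTF hx1, hx2⟩
    rw [hFP, Subgroup.mem_bot] at this
    rw [Subgroup.mem_bot]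
    exact Subtype.ext this
  -- cardinality
  haveI : Finite (W ⧸ Np) := Quotient.finite _
  have hcard : Nat.card T ≤ Nat.card (W ⧸ Np) := by
    have hinj : Function.Injective
        (fun t : T => (QuotientGroup.mk (⟨(t : G), hTW t.2⟩ : W) : W ⧸ Np)) := by
      intro a b hab
      simp only at hab
      rw [QuotientGroup.eq] at hab
      rw [hNp_def, Subgroup.mem_subgroupOf] at hab
      have hmem : ((a : G))⁻¹ * (b : G) ∈ F ⊓ P := by
        rw [Subgroup.mem_inf]
        refine ⟨mul_mem (inv_mem (hTF a.2)) (hTF b.2), ?_⟩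
        simpa using hab
      rw [hFP, Subgroup.mem_bot] at hmem
      exact Subtype.ext (inv_mul_eq_one.mp hmem)
    exact Nat.card_le_card_of_injective _ hinj
  exact ⟨W, Np, hNpNormal, hWfin, hsimple, hTW, hTNp, hcard⟩
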